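/- Consider f : ℝ × ℝ → ℝ given by f(x, y) = −x²y + y²/2 and the associated operator B(x,y) = (∂f/∂x (x,y), −∂f/∂y (x,y)) = (−2xy, x² − y). The Minty variational inequality condition on [−1,1] × ℝ fails for this operator: for every x̄ ∈ [−1, 1] and every ȳ ∈ ℝ, there exist x ∈ [−1, 1] and y ∈ ℝ such that (−2xy)(x − x̄) + (x² − y)(y − ȳ) < 0. (In fact, for any fixed x ∈ [−1,1], the quantity (−2xy)(x − x̄) + (x² − y)(y − ȳ) tends to −∞ as |y| → ∞.) -/

import Mathlib

open Filter

lemma aux_tendsto (xb yb x : ℝ) :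
    Tendsto (fun y : ℝ => (-2 * x * y) * (x - xb) + (x ^ 2 - y) * (y - yb))
      (Filter.cocompact ℝ) Filter.atBot := by
  set B : ℝ := yb + x ^ 2 - 2 * x * (x - xb) with hB
  set C : ℝ := -(x ^ 2 * yb) with hC
  have hg : Tendsto (fun t : ℝ => -t ^ 2 + |B| * t + C) atTop atBot := by
    have h1 : Tendsto (fun t : ℝ => t ^ 2 - |B| * t - C) atTop atTop := by
      have h2 : Tendsto (fun t : ℝ => t * (t - |B|)) atTop atTop :=
        Filter.Tendsto.atTop_mul_atTop₀ tendsto_id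
          (tendsto_atTop_add_const_right _ (-|B|) tendsto_id)
      have h3 := tendsto_atTop_add_const_right atTop (-C) h2
      refine h3.congr (fun t => by ring)
    have := tendsto_neg_atTop_atBot.comp h1
    refine this.congr (fun t => by simp [Function.comp]; ring)
  have habs : Tendsto (fun y : ℝ => |y|) (cocompact ℝ) atTop := by
    exact tendsto_norm_cocompact_atTop (E := ℝ)
  have hcomp := hg.comp habs
  refine tendsto_atBot_mono (fun y => ?_) hcomp
  have h1 : B * y ≤ |B| * |y| := (le_abs_self _).trans (abs_mul B y).le
  have h2 : y ^ 2 = |y| ^ 2 := (sq_abs y).symm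
  have key : (-2 * x * y) * (x - xb) + (x ^ 2 - y) * (y - yb) = -y ^ 2 + B * y + C := by
    rw [hB, hC]; ring
  simp only [Function.comp]
  linarith [h1, h2, key]

theorem minty_fails_for_ncsc_example :
    (∀ xb ∈ Set.Icc (-1 : ℝ) 1, ∀ yb : ℝ, ∃ x ∈ Set.Icc (-1 : ℝ) 1, ∃ y : ℝ,
      (-2 * x * y) * (x - xb) + (x ^ 2 - y) * (y - yb) < 0) ∧
    (∀ xb yb : ℝ, ∀ x ∈ Set.Icc (-1 : ℝ) 1,
      Filter.Tendsto (fun y : ℝ => (-2 * x * y) * (x - xb) + (x ^ 2 - y) * (y - yb))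
        (Filter.cocompact ℝ) Filter.atBot) := by
  constructor
  · intro xb _ yb
    refine ⟨0, by norm_num, ?_⟩
    have h := aux_tendsto xb yb 0
    exact (h.eventually (eventually_lt_atBot 0)).exists
  · intro xb yb x _
    exact aux_tendsto xb yb x
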